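/- Let M be a finitely generated multiplication R-module. Then for any submodule N of M, √(N :_R M) = (M-rad(N) :_R M). -/

import Mathlib

open Submodule Polynomial

variable {R : Type*} [CommRing R] {M : Type*} [AddCommGroup M] [Module R M]

/-- A prime submodule: proper, and `a • m ∈ P` implies `m ∈ P` or `a • ⊤ ≤ P`. -/
def IsPrimeSubmodule (P : Submodule R M) : Prop :=
  P ≠ ⊤ ∧ ∀ (a : R) (m : M), a • m ∈ P → m ∈ P ∨ a ∈ P.colon ⊤

/-- The `M`-radical of `N`: intersection of prime submodules containing `N`
(equal to `⊤` when there are none). -/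
def mRad (N : Submodule R M) : Submodule R M :=
  sInf {P : Submodule R M | IsPrimeSubmodule P ∧ N ≤ P}

/-- 2-absorbing primary submodule. -/
def Is2AbsorbingPrimary (N : Submodule R M) : Prop :=
  N ≠ ⊤ ∧ ∀ (a b : R) (m : M), (a * b) • m ∈ N →
    a • m ∈ mRad N ∨ b • m ∈ mRad N ∨ a * b ∈ N.colon ⊤

/-- Multiplication module: every submodule is `I • ⊤` for some ideal `I`. -/
def IsMultiplicationModule (R M : Type*) [CommRing R] [AddCommGroup M] [Module R M] : Prop :=
  ∀ N : Submodule R M, ∃ I : Ideal R, N = I • (⊤ : Submodule R M)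

/-- Primary submodule. -/
def IsPrimarySubmodule (P : Submodule R M) : Prop :=
  P ≠ ⊤ ∧ ∀ (a : R) (m : M), a • m ∈ P → m ∈ P ∨ a ∈ (P.colon ⊤).radical

/-- 2-absorbing primary ideal. -/
def Is2AbsorbingPrimaryIdeal {R : Type*} [CommRing R] (I : Ideal R) : Prop :=
  I ≠ ⊤ ∧ ∀ a b c : R, a * b * c ∈ I → a * b ∈ I ∨ a * c ∈ I.radical ∨ b * c ∈ I.radical

/-- 2-absorbing submodule. -/
def Is2AbsorbingSubmodule (K : Submodule R M) : Prop :=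
  K ≠ ⊤ ∧ ∀ (a b : R) (m : M), (a * b) • m ∈ K →
    a * b ∈ K.colon ⊤ ∨ a • m ∈ K ∨ b • m ∈ K

lemma lemA [Module.Finite R M] (p : Ideal R) (hp : p.IsPrime)
    (hann : ∀ r : R, (∀ m : M, r • m = 0) → r ∈ p)
    {x : R} (hx : x ∈ (p • (⊤ : Submodule R M)).colon ⊤) : x ∈ p := by
  have hf : LinearMap.range (x • (LinearMap.id : M →ₗ[R] M)) ≤ p • ⊤ := by
    rintro _ ⟨m, rfl⟩
    exact Submodule.mem_colon.mp hx m trivial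
  obtain ⟨q, hq, -, hcoeff, heval⟩ :=
    LinearMap.exists_monic_and_coeff_mem_pow_and_aeval_eq_zero_of_range_le_smul R
      (x • (LinearMap.id : M →ₗ[R] M)) p hf
  have h1 : q.eval x ∈ p := by
    apply hann
    intro m
    have h2 : Polynomial.aeval (x • (LinearMap.id : M →ₗ[R] M)) q m = 0 := by
      rw [heval]; rfl
    rwa [← Module.algebraMap_end_eq_smul_id, aeval_algebraMap_apply_eq_algebraMap_eval,
      Module.algebraMap_end_eq_smul_id] at h2
  have h3 : x ^ q.natDegree ∈ p := by
    have hsum : q.eval x = ∑ i ∈ Finset.range (q.natDegree + 1), q.coeff i * x ^ i :=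
      q.eval_eq_sum_range x
    rw [Finset.sum_range_succ, hq.coeff_natDegree, one_mul] at hsum
    have h4 : ∑ i ∈ Finset.range q.natDegree, q.coeff i * x ^ i ∈ p := by
      apply Ideal.sum_mem
      intro i hi
      apply Ideal.mul_mem_right
      have := hcoeff i
      exact Ideal.pow_le_self (Nat.sub_ne_zero_of_lt (Finset.mem_range.mp hi)) this
    have : x ^ q.natDegree = q.eval x - ∑ i ∈ Finset.range q.natDegree, q.coeff i * x ^ i := by
      rw [hsum]; ring
    rw [this]; exact Ideal.sub_mem _ h1 h4
  exact hp.mem_of_pow_mem _ h3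

theorem stmt2 [Module.Finite R M] (hM : IsMultiplicationModule R M)
    (N : Submodule R M) :
    (N.colon ⊤).radical = (mRad N).colon ⊤ := by
  apply le_antisymm
  · intro x hx
    obtain ⟨n, hn⟩ := hx
    rw [Submodule.mem_colon]
    intro m _
    rw [mRad, Submodule.mem_sInf]
    rintro P ⟨⟨hPtop, hPprime⟩, hNP⟩
    have key : ∀ k (m : M), x ^ k • m ∈ P → x • m ∈ P := by
      intro k
      induction k with
      | zero => intro m h; exact P.smul_mem x (by simpa using h)
      | succ j ih =>
        intro m h
        rcases hPprime x (x ^ j • m) (by rw [← mul_smul, ← pow_succ']; exact h) with h1 | h2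
        · exact ih m h1
        · exact Submodule.mem_colon.mp h2 m trivial
    exact key n m (hNP (Submodule.mem_colon.mp hn m trivial))
  · intro x hx
    rw [Ideal.radical_eq_sInf, Submodule.mem_sInf]
    rintro p ⟨hle, hprime⟩
    have hann : ∀ r : R, (∀ m : M, r • m = 0) → r ∈ p := by
      intro r hr
      exact hle (Submodule.mem_colon.mpr fun m _ => by rw [hr m]; exact N.zero_mem)
    have hple : p ≤ (p • (⊤ : Submodule R M)).colon ⊤ := fun r hr =>
      Submodule.mem_colon.mpr fun m _ => Submodule.smul_mem_smul hr trivial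
    have hP : IsPrimeSubmodule (p • (⊤ : Submodule R M)) := by
      constructor
      · intro h
        refine hprime.ne_top (Ideal.eq_top_iff_one _ |>.mpr ?_)
        exact lemA p hprime hann (Submodule.mem_colon.mpr fun m _ => by rw [h]; trivial)
      · intro a m ham
        by_cases hcol : a ∈ (p • (⊤ : Submodule R M)).colon ⊤
        · exact Or.inr hcol
        left
        have hap : a ∉ p := fun h => hcol (hple h)
        obtain ⟨J, hJ⟩ := hM (Submodule.span R {m})
        have hJp : J ≤ p := by
          intro j hj
          refine (hprime.mem_or_mem ?_).resolve_left hap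
          apply lemA p hprime hann
          rw [Submodule.mem_colon]
          intro m' _
          have : j • m' ∈ Submodule.span R {m} := by
            rw [hJ]; exact Submodule.smul_mem_smul hj trivial
          obtain ⟨r, hr⟩ := Submodule.mem_span_singleton.mp this
          rw [mul_smul, ← hr, smul_comm]
          exact Submodule.smul_mem _ r ham
        have : Submodule.span R {m} ≤ p • ⊤ := by
          rw [hJ]; exact Submodule.smul_mono_left hJp
        exact this (Submodule.mem_span_singleton_self m)
    have hNle : N ≤ p • (⊤ : Submodule R M) := by
      obtain ⟨I, hI⟩ := hM N
      rw [hI]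
      refine Submodule.smul_mono_left fun y hy => hle ?_
      rw [Submodule.mem_colon]
      intro m' _
      rw [hI]
      exact Submodule.smul_mem_smul hy trivial
    have hm : mRad N ≤ p • (⊤ : Submodule R M) := sInf_le ⟨hP, hNle⟩
    exact lemA p hprime hann (Submodule.mem_colon.mpr fun m _ => hm (Submodule.mem_colon.mp hx m trivial))
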